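/- Let B be a nondegenerate symmetric bilinear form on C^3 and let l_1, l_2, l_3 be pairwise distinct, pairwise B-orthogonal one-dimensional subspaces of C^3. Then the group of linear automorphisms g of C^3 with det(g) = 1, preserving B (i.e. B(g(u),g(v)) = B(u,v) for all u,v), and permuting the set {l_1, l_2, l_3}, has exactly 24 elements. -/
import Mathlib
open Submodule Module Matrix

noncomputable section Aux24C


private def mkIso (b : Basis (Fin 3) ℂ (Fin 3 → ℂ)) (σ : Equiv.Perm (Fin 3))
    (c : Fin 3 → ℂ) (h : ∀ i, c i ≠ 0) : (Fin 3 → ℂ) ≃ₗ[ℂ] (Fin 3 → ℂ) :=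
  b.equiv (b.unitsSMul fun j => Units.mk0 (c (σ⁻¹ j)) (h _)) σ

private lemma mkIso_apply (b : Basis (Fin 3) ℂ (Fin 3 → ℂ)) (σ : Equiv.Perm (Fin 3))
    (c : Fin 3 → ℂ) (h : ∀ i, c i ≠ 0) (i : Fin 3) :
    mkIso b σ c h (b i) = c i • b (σ i) := by
  simp [mkIso, Basis.equiv_apply, Basis.unitsSMul_apply, Units.smul_def]

private lemma mkIso_det (b : Basis (Fin 3) ℂ (Fin 3 → ℂ)) (σ : Equiv.Perm (Fin 3))
    (c : Fin 3 → ℂ) (h : ∀ i, c i ≠ 0) :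
    LinearMap.det ((mkIso b σ c h : (Fin 3 → ℂ) ≃ₗ[ℂ] (Fin 3 → ℂ)) :
        (Fin 3 → ℂ) →ₗ[ℂ] (Fin 3 → ℂ))
      = ((Equiv.Perm.sign σ : ℤ) : ℂ) * (c 0 * c 1 * c 2) := by
  rw [← LinearMap.det_toMatrix b]
  have hM : (LinearMap.toMatrix b b) ((mkIso b σ c h : (Fin 3 → ℂ) ≃ₗ[ℂ] (Fin 3 → ℂ)) :
        (Fin 3 → ℂ) →ₗ[ℂ] (Fin 3 → ℂ)) = (Matrix.diagonal c).submatrix σ.symm id := by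
    ext i j
    rw [LinearMap.toMatrix_apply, LinearEquiv.coe_coe, mkIso_apply, LinearEquiv.map_smul]
    simp only [Basis.repr_self, Finsupp.smul_single, smul_eq_mul, mul_one,
      Finsupp.single_apply, Matrix.submatrix_apply, Matrix.diagonal_apply, id_eq]
    by_cases hij : σ j = i
    · subst hij; simp
    · rw [if_neg hij, if_neg]
      intro hc
      exact hij (by rw [← hc, Equiv.apply_symm_apply])
  rw [hM]
  rw [show ((Matrix.diagonal c).submatrix ⇑σ.symm id) = ((Matrix.diagonal c).submatrix ⇑(σ⁻¹ : Equiv.Perm (Fin 3)) id) from rfl]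
  rw [Matrix.det_permute, Matrix.det_diagonal, Fin.prod_univ_three]
  simp



private lemma no_isotropic (B : (Fin 3 → ℂ) →ₗ[ℂ] (Fin 3 → ℂ) →ₗ[ℂ] ℂ)
    (hB : B.Nondegenerate) (x y : Fin 3 → ℂ) (hxy : LinearIndependent ℂ ![x, y])
    (h00 : B x x = 0) (h01 : B x y = 0) (h10 : B y x = 0) (h11 : B y y = 0) : False := by
  obtain ⟨w, hw⟩ : ∃ w, w ∉ span ℂ (Set.range ![x, y]) := by
    by_contra hcon; push_neg at hcon
    have htop : span ℂ (Set.range ![x, y]) = ⊤ := eq_top_iff'.mpr hcon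
    have h2 := finrank_range_le_card (R := ℂ) ![x, y]
    rw [Set.finrank, htop, finrank_top] at h2
    simp at h2
  have hcons : LinearIndependent ℂ ![w, x, y] :=
    linearIndependent_fin_cons.mpr ⟨hxy, hw⟩
  let b : Basis (Fin 3) ℂ (Fin 3 → ℂ) :=
    basisOfLinearIndependentOfCardEqFinrank hcons (by simp)
  have hb : ⇑b = ![w, x, y] := coe_basisOfLinearIndependentOfCardEqFinrank _ _
  have hrad : ∀ u : Fin 3 → ℂ, (∀ i, B u (b i) = 0) → u = 0 := by
    intro u hu
    refine hB.1 u fun n => ?_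
    have : (B u) = (0 : (Fin 3 → ℂ) →ₗ[ℂ] ℂ) := b.ext fun i => by simpa using hu i
    rw [this]; rfl
  set z := B y w • x - B x w • y with hz
  have hz0 : z = 0 := by
    refine hrad z fun i => ?_
    have : B z = B y w • B x - B x w • B y := by rw [hz]; simp [map_sub]
    rw [this]
    fin_cases i <;>
      simp [hb, h00, h01, h10, h11, mul_comm]
  have h2 := Fintype.linearIndependent_iff.mp hxy ![B y w, -(B x w)] (by
    rw [Fin.sum_univ_two]
    simp only [Matrix.cons_val_zero, Matrix.cons_val_one, Matrix.head_cons, neg_smul]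
    rw [← sub_eq_add_neg, ← hz, hz0])
  have hyw : B y w = 0 := by simpa using h2 0
  have hxw : B x w = 0 := by simpa using h2 1
  have hx0 : x = 0 := by
    refine hrad x fun i => ?_
    fin_cases i <;> simp [hb, h00, h01, hxw]
  exact hxy.ne_zero 0 (by simpa using hx0)


end Aux24C

/-- The stabilizer, in the determinant-one isometry group of a nondegenerate
symmetric bilinear form on `ℂ³`, of an (unordered) triple of pairwise distinct,
pairwise orthogonal lines has exactly `24` elements. -/
theorem stabilizer_of_orthogonal_triple_has_24_elements
    (B : (Fin 3 → ℂ) →ₗ[ℂ] (Fin 3 → ℂ) →ₗ[ℂ] ℂ)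
    (hB : B.Nondegenerate) (hsymm : ∀ u v, B u v = B v u)
    (l : Fin 3 → Submodule ℂ (Fin 3 → ℂ))
    (hdim : ∀ i, Module.finrank ℂ (l i) = 1)
    (hdist : ∀ i j, i ≠ j → l i ≠ l j)
    (horth : ∀ i j, i ≠ j → ∀ u ∈ l i, ∀ v ∈ l j, B u v = 0) :
    {g : (Fin 3 → ℂ) ≃ₗ[ℂ] (Fin 3 → ℂ) |
      LinearMap.det (g : (Fin 3 → ℂ) →ₗ[ℂ] (Fin 3 → ℂ)) = 1 ∧
      (∀ u v, B (g u) (g v) = B u v) ∧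
      (∀ i, ∃ j, Submodule.map (g : (Fin 3 → ℂ) →ₗ[ℂ] (Fin 3 → ℂ)) (l i) = l j)}.ncard
      = 24 := by
  classical
  -- ### Step 1: generators of the lines
  have hgen : ∀ i, ∃ w : Fin 3 → ℂ, w ≠ 0 ∧ l i = span ℂ {w} := by
    intro i
    have h1 : (l i).IsPrincipal := by
      rw [← Submodule.finrank_le_one_iff_isPrincipal]
      rw [hdim i]
    obtain ⟨w, hw⟩ := h1
    refine ⟨w, ?_, hw⟩
    intro hw0
    rw [hw0] at hw
    have : Module.finrank ℂ (l i) = 0 := by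
      rw [hw, show span ℂ ({0} : Set (Fin 3 → ℂ)) = ⊥ by simp]
      simp
    rw [hdim i] at this; exact one_ne_zero this
  choose v hv0 hlv using hgen
  have hvmem : ∀ i, v i ∈ l i := fun i => (hlv i) ▸ mem_span_singleton_self _
  have horthv : ∀ i j, i ≠ j → B (v i) (v j) = 0 :=
    fun i j h => horth i j h _ (hvmem i) _ (hvmem j)
  -- pairwise independence
  have hpair : ∀ i j, i ≠ j → LinearIndependent ℂ ![v i, v j] := by
    intro i j hij
    rw [linearIndependent_fin2]
    refine ⟨by simpa using hv0 j, fun a ha => ?_⟩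
    simp only [Matrix.cons_val_one, Matrix.head_cons, Matrix.cons_val_zero] at ha
    apply hdist i j hij
    have ha' : a ≠ 0 := by rintro rfl; simp at ha; exact hv0 i ha.symm
    rw [hlv i, hlv j, ← ha]
    exact (span_singleton_smul_eq (isUnit_iff_ne_zero.mpr ha') _)
  -- ### Step 2: independence of the three generators
  have hindep : LinearIndependent ℂ v := by
    rw [Fintype.linearIndependent_iff]
    intro gc hsum
    by_contra hne
    push_neg at hne
    obtain ⟨k, hk⟩ := hne
    have hgd : ∀ j, gc j * B (v j) (v j) = 0 := by
      intro j
      have h0 : B (v j) (∑ i, gc i • v i) = 0 := by rw [hsum]; simp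
      rw [map_sum] at h0
      rw [Finset.sum_eq_single j] at h0
      · simpa using h0
      · intro m _ hmj
        rw [LinearMap.map_smul, horthv j m (Ne.symm hmj)]; simp
      · intro hj; exact absurd (Finset.mem_univ j) hj
    by_cases hm : ∃ m, m ≠ k ∧ gc m ≠ 0
    · obtain ⟨m, hmk, hm0⟩ := hm
      have dk : B (v k) (v k) = 0 := by
        rcases mul_eq_zero.mp (hgd k) with h | h
        · exact absurd h hk
        · exact h
      have dm : B (v m) (v m) = 0 := by
        rcases mul_eq_zero.mp (hgd m) with h | h
        · exact absurd h hm0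
        · exact h
      exact no_isotropic B hB (v k) (v m) (hpair k m (Ne.symm hmk)) dk
        (horthv k m (Ne.symm hmk)) (horthv m k hmk) dm
    · push_neg at hm
      have : gc k • v k = 0 := by
        rw [← hsum]
        rw [Finset.sum_eq_single k]
        · intro m _ hmk; rw [hm m hmk, zero_smul]
        · intro hj; exact absurd (Finset.mem_univ k) hj
      rcases smul_eq_zero.mp this with h | h
      · exact hk h
      · exact hv0 k h
  -- ### Step 3: the basis
  let b : Basis (Fin 3) ℂ (Fin 3 → ℂ) :=
    basisOfLinearIndependentOfCardEqFinrank hindep (by simp)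
  have hb : ⇑b = v := coe_basisOfLinearIndependentOfCardEqFinrank _ _
  have hbi : ∀ i, b i = v i := fun i => congrFun hb i
  have hlb : ∀ i, l i = span ℂ {b i} := fun i => by rw [hbi]; exact hlv i
  have horthb : ∀ i j, i ≠ j → B (b i) (b j) = 0 := by
    intro i j hij; rw [hbi, hbi]; exact horthv i j hij
  set d : Fin 3 → ℂ := fun i => B (b i) (b i) with hd
  have hd0 : ∀ i, d i ≠ 0 := by
    intro i hdi
    have hz : ∀ u, B (b i) u = 0 := by
      intro u
      have : (B (b i)) = (0 : (Fin 3 → ℂ) →ₗ[ℂ] ℂ) := b.ext fun j => by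
        by_cases h : i = j
        · subst h; simpa using hdi
        · simpa using horthb i j h
      rw [this]; rfl
    exact b.ne_zero i (hB.1 (b i) hz)
  -- ### Step 4: square roots
  have hsq : ∀ (σ : Equiv.Perm (Fin 3)) (i : Fin 3), ∃ z : ℂ, z ^ 2 * d (σ i) = d i := by
    intro σ i
    obtain ⟨z, hz⟩ := IsAlgClosed.exists_pow_nat_eq (k := ℂ) (d i / d (σ i)) (n := 2) (by norm_num)
    refine ⟨z, ?_⟩
    rw [hz, div_mul_cancel₀]
    exact hd0 _
  choose s hs using hsq
  have hs0 : ∀ σ i, s σ i ≠ 0 := by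
    intro σ i h
    apply hd0 i
    rw [← hs σ i, h]
    ring
  have hdapp : ∀ i, d i = B (b i) (b i) := fun _ => rfl
  -- ### Step 5: sign and the auxiliary scalar t
  have hsgn2 : ∀ σ : Equiv.Perm (Fin 3), ((Equiv.Perm.sign σ : ℤ) : ℂ) ^ 2 = 1 := by
    intro σ
    rcases Int.units_eq_one_or (Equiv.Perm.sign σ) with h | h <;> rw [h] <;> norm_num
  have hsgn0 : ∀ σ : Equiv.Perm (Fin 3), ((Equiv.Perm.sign σ : ℤ) : ℂ) ≠ 0 := by
    intro σ h
    have := hsgn2 σ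
    rw [h] at this; norm_num at this
  have ht2 : ∀ σ : Equiv.Perm (Fin 3),
      (((Equiv.Perm.sign σ : ℤ) : ℂ) * (s σ 0 * s σ 1 * s σ 2)) ^ 2 = 1 := by
    intro σ
    have hprod : d 0 * d 1 * d 2 = d (σ 0) * d (σ 1) * d (σ 2) := by
      have h := Equiv.prod_comp σ d
      rw [Fin.prod_univ_three, Fin.prod_univ_three] at h
      exact h.symm
    have key : (((Equiv.Perm.sign σ : ℤ) : ℂ) * (s σ 0 * s σ 1 * s σ 2)) ^ 2 *
        (d (σ 0) * (d (σ 1) * d (σ 2)))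
        = ((Equiv.Perm.sign σ : ℤ) : ℂ) ^ 2 *
          ((s σ 0 ^ 2 * d (σ 0)) * ((s σ 1 ^ 2 * d (σ 1)) * (s σ 2 ^ 2 * d (σ 2)))) := by
      ring
    rw [hsgn2, hs, hs, hs, one_mul] at key
    have hne : d (σ 0) * (d (σ 1) * d (σ 2)) ≠ 0 :=
      mul_ne_zero (hd0 _) (mul_ne_zero (hd0 _) (hd0 _))
    have : (((Equiv.Perm.sign σ : ℤ) : ℂ) * (s σ 0 * s σ 1 * s σ 2)) ^ 2 *
        (d (σ 0) * (d (σ 1) * d (σ 2))) = 1 * (d (σ 0) * (d (σ 1) * d (σ 2))) := by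
      rw [key, one_mul]
      calc d 0 * (d 1 * d 2) = d 0 * d 1 * d 2 := by ring
        _ = d (σ 0) * d (σ 1) * d (σ 2) := hprod
        _ = d (σ 0) * (d (σ 1) * d (σ 2)) := by ring
    exact mul_right_cancel₀ hne this
  -- ### Step 6: membership criterion
  have hmemS : ∀ (σ : Equiv.Perm (Fin 3)) (c : Fin 3 → ℂ) (hc : ∀ i, c i ≠ 0),
      (∀ i, c i ^ 2 * d (σ i) = d i) →
      ((Equiv.Perm.sign σ : ℤ) : ℂ) * (c 0 * c 1 * c 2) = 1 →
      mkIso b σ c hc ∈ {g : (Fin 3 → ℂ) ≃ₗ[ℂ] (Fin 3 → ℂ) |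
        LinearMap.det (g : (Fin 3 → ℂ) →ₗ[ℂ] (Fin 3 → ℂ)) = 1 ∧
        (∀ u v, B (g u) (g v) = B u v) ∧
        (∀ i, ∃ j, Submodule.map (g : (Fin 3 → ℂ) →ₗ[ℂ] (Fin 3 → ℂ)) (l i) = l j)} := by
    intro σ c hc h2 hdet
    refine ⟨by rw [mkIso_det]; exact hdet, ?_, ?_⟩
    · intro u w
      have hB2 : B.compl₁₂ ((mkIso b σ c hc : (Fin 3 → ℂ) ≃ₗ[ℂ] (Fin 3 → ℂ)) :
            (Fin 3 → ℂ) →ₗ[ℂ] (Fin 3 → ℂ))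
          ((mkIso b σ c hc : (Fin 3 → ℂ) ≃ₗ[ℂ] (Fin 3 → ℂ)) :
            (Fin 3 → ℂ) →ₗ[ℂ] (Fin 3 → ℂ)) = B := by
        apply LinearMap.ext_basis b b
        intro i j
        rw [LinearMap.compl₁₂_apply]
        simp only [LinearEquiv.coe_coe]
        rw [mkIso_apply, mkIso_apply, LinearMap.map_smul₂, LinearMap.map_smul]
        by_cases hij : i = j
        · subst hij
          have := h2 i
          rw [hdapp i, hdapp (σ i)] at this
          simp only [smul_eq_mul]
          linear_combination this
        · rw [horthb i j hij, horthb (σ i) (σ j) (fun h => hij (σ.injective h))]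
          simp
      have := DFunLike.congr_fun (DFunLike.congr_fun hB2 u) w
      rw [LinearMap.compl₁₂_apply] at this
      exact this
    · intro i
      refine ⟨σ i, ?_⟩
      rw [hlb i, hlb (σ i), Submodule.map_span, Set.image_singleton]
      have : ((mkIso b σ c hc : (Fin 3 → ℂ) ≃ₗ[ℂ] (Fin 3 → ℂ)) :
          (Fin 3 → ℂ) →ₗ[ℂ] (Fin 3 → ℂ)) (b i) = c i • b (σ i) := mkIso_apply b σ c hc i
      rw [this]
      exact span_singleton_smul_eq (isUnit_iff_ne_zero.mpr (hc i)) _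
  -- ### Step 7: characterization of members
  have hSchar : ∀ g : (Fin 3 → ℂ) ≃ₗ[ℂ] (Fin 3 → ℂ),
      LinearMap.det (g : (Fin 3 → ℂ) →ₗ[ℂ] (Fin 3 → ℂ)) = 1 →
      (∀ u v, B (g u) (g v) = B u v) →
      (∀ i, ∃ j, Submodule.map (g : (Fin 3 → ℂ) →ₗ[ℂ] (Fin 3 → ℂ)) (l i) = l j) →
      ∃ (σ : Equiv.Perm (Fin 3)) (c : Fin 3 → ℂ) (hc : ∀ i, c i ≠ 0),
        (∀ i, c i ^ 2 * d (σ i) = d i) ∧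
        ((Equiv.Perm.sign σ : ℤ) : ℂ) * (c 0 * c 1 * c 2) = 1 ∧
        g = mkIso b σ c hc := by
    intro g hgdet hgiso hgperm
    choose τ hτ using hgperm
    have hinj : Function.Injective τ := by
      intro i j hij
      by_contra hne
      apply hdist i j hne
      have h1 : Submodule.map (g : (Fin 3 → ℂ) →ₗ[ℂ] (Fin 3 → ℂ)) (l i)
          = Submodule.map (g : (Fin 3 → ℂ) →ₗ[ℂ] (Fin 3 → ℂ)) (l j) := by
        rw [hτ i, hτ j, hij]
      exact Submodule.map_injective_of_injective g.injective h1
    let σ : Equiv.Perm (Fin 3) := Equiv.ofBijective τ (Finite.injective_iff_bijective.mp hinj)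
    have hσ : ∀ i, σ i = τ i := fun i => rfl
    have hgm : ∀ i, ∃ a : ℂ, a • b (σ i) = g (b i) := by
      intro i
      have h1 : g (b i) ∈ l (σ i) := by
        rw [hσ, ← hτ i]
        exact Submodule.mem_map_of_mem (by rw [hbi]; exact hvmem i)
      rw [hlb (σ i)] at h1
      exact mem_span_singleton.mp h1
    choose c hc using hgm
    have hc0 : ∀ i, c i ≠ 0 := by
      intro i h
      apply b.ne_zero i
      have := hc i
      rw [h, zero_smul] at this
      exact g.injective (by rw [← this]; simp)
    have hc2 : ∀ i, c i ^ 2 * d (σ i) = d i := by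
      intro i
      have h1 := hgiso (b i) (b i)
      rw [← hc i] at h1
      rw [LinearMap.map_smul₂, LinearMap.map_smul] at h1
      rw [hdapp i, hdapp (σ i)]
      simp only [smul_eq_mul] at h1
      linear_combination h1
    have hgeq : g = mkIso b σ c hc0 := by
      apply LinearEquiv.toLinearMap_injective
      apply b.ext
      intro i
      show g (b i) = mkIso b σ c hc0 (b i)
      rw [mkIso_apply, ← hc i]
    refine ⟨σ, c, hc0, hc2, ?_, hgeq⟩
    rw [← mkIso_det b σ c hc0, ← hgeq]
    exact hgdet
  -- ### Step 8: cardinality of the square roots of unity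
  have hU : Nat.card {z : ℂ // z ^ 2 = 1} = 2 := by
    have hf : Function.Bijective (fun t : Bool =>
        if t then (⟨1, by norm_num⟩ : {z : ℂ // z ^ 2 = 1}) else ⟨-1, by norm_num⟩) := by
      constructor
      · intro a b hab
        cases a <;> cases b <;> simp only [if_true, if_false, Subtype.mk.injEq] at hab <;>
          first | rfl | (exfalso; norm_num at hab)
      · rintro ⟨z, hz⟩
        have h1 : (z - 1) * (z + 1) = 0 := by linear_combination hz
        rcases mul_eq_zero.mp h1 with h | h
        · exact ⟨true, by simp [Subtype.ext_iff, (sub_eq_zero.mp h).symm]⟩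
        · exact ⟨false, by simp [Subtype.ext_iff, eq_neg_of_add_eq_zero_left h]⟩
    rw [← Nat.card_eq_of_bijective _ hf]
    simp
  -- ### Step 9: the parametrization map
  let cv : Equiv.Perm (Fin 3) → ℂ → ℂ → (Fin 3 → ℂ) := fun σ e0 e1 =>
    ![e0 * s σ 0, e1 * s σ 1,
      (((Equiv.Perm.sign σ : ℤ) : ℂ) * (s σ 0 * s σ 1 * s σ 2)) * e0 * e1 * s σ 2]
  have hcva : ∀ σ e0 e1, (cv σ e0 e1 0 = e0 * s σ 0) ∧ (cv σ e0 e1 1 = e1 * s σ 1) ∧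
      (cv σ e0 e1 2 =
        (((Equiv.Perm.sign σ : ℤ) : ℂ) * (s σ 0 * s σ 1 * s σ 2)) * e0 * e1 * s σ 2) :=
    fun _ _ _ => ⟨rfl, rfl, rfl⟩
  have hcvne : ∀ σ (e0 e1 : ℂ), e0 ^ 2 = 1 → e1 ^ 2 = 1 → ∀ i, cv σ e0 e1 i ≠ 0 := by
    intro σ e0 e1 he0 he1 i
    have h0 : e0 ≠ 0 := by rintro rfl; norm_num at he0
    have h1 : e1 ≠ 0 := by rintro rfl; norm_num at he1
    have htne : (((Equiv.Perm.sign σ : ℤ) : ℂ) * (s σ 0 * s σ 1 * s σ 2)) ≠ 0 := by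
      intro h
      have := ht2 σ
      rw [h] at this; norm_num at this
    fin_cases i
    · show e0 * s σ 0 ≠ 0; exact mul_ne_zero h0 (hs0 σ 0)
    · show e1 * s σ 1 ≠ 0; exact mul_ne_zero h1 (hs0 σ 1)
    · show (((Equiv.Perm.sign σ : ℤ) : ℂ) * (s σ 0 * s σ 1 * s σ 2)) * e0 * e1 * s σ 2 ≠ 0
      exact mul_ne_zero (mul_ne_zero (mul_ne_zero htne h0) h1) (hs0 σ 2)
  have hcvsq : ∀ σ (e0 e1 : ℂ), e0 ^ 2 = 1 → e1 ^ 2 = 1 →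
      ∀ i, (cv σ e0 e1 i) ^ 2 * d (σ i) = d i := by
    intro σ e0 e1 he0 he1 i
    fin_cases i
    · show (e0 * s σ 0) ^ 2 * d (σ 0) = d 0
      have : (e0 * s σ 0) ^ 2 * d (σ 0) = e0 ^ 2 * (s σ 0 ^ 2 * d (σ 0)) := by ring
      rw [this, he0, hs, one_mul]
    · show (e1 * s σ 1) ^ 2 * d (σ 1) = d 1
      have : (e1 * s σ 1) ^ 2 * d (σ 1) = e1 ^ 2 * (s σ 1 ^ 2 * d (σ 1)) := by ring
      rw [this, he1, hs, one_mul]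
    · show ((((Equiv.Perm.sign σ : ℤ) : ℂ) * (s σ 0 * s σ 1 * s σ 2)) * e0 * e1 * s σ 2) ^ 2
            * d (σ 2) = d 2
      have : ((((Equiv.Perm.sign σ : ℤ) : ℂ) * (s σ 0 * s σ 1 * s σ 2)) * e0 * e1 * s σ 2) ^ 2
            * d (σ 2)
          = (((Equiv.Perm.sign σ : ℤ) : ℂ) * (s σ 0 * s σ 1 * s σ 2)) ^ 2 * e0 ^ 2 * e1 ^ 2 *
            (s σ 2 ^ 2 * d (σ 2)) := by ring
      rw [this, ht2, he0, he1, hs]; ring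
  have hcvdet : ∀ σ (e0 e1 : ℂ), e0 ^ 2 = 1 → e1 ^ 2 = 1 →
      ((Equiv.Perm.sign σ : ℤ) : ℂ) * (cv σ e0 e1 0 * cv σ e0 e1 1 * cv σ e0 e1 2) = 1 := by
    intro σ e0 e1 he0 he1
    rw [(hcva σ e0 e1).1, (hcva σ e0 e1).2.1, (hcva σ e0 e1).2.2]
    have : ((Equiv.Perm.sign σ : ℤ) : ℂ) * (e0 * s σ 0 * (e1 * s σ 1) *
        ((((Equiv.Perm.sign σ : ℤ) : ℂ) * (s σ 0 * s σ 1 * s σ 2)) * e0 * e1 * s σ 2))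
        = (((Equiv.Perm.sign σ : ℤ) : ℂ) * (s σ 0 * s σ 1 * s σ 2)) ^ 2 * e0 ^ 2 * e1 ^ 2 := by
      ring
    rw [this, ht2, he0, he1]; ring
  let Φ : Equiv.Perm (Fin 3) × {z : ℂ // z ^ 2 = 1} × {z : ℂ // z ^ 2 = 1} →
      {g : (Fin 3 → ℂ) ≃ₗ[ℂ] (Fin 3 → ℂ) |
        LinearMap.det (g : (Fin 3 → ℂ) →ₗ[ℂ] (Fin 3 → ℂ)) = 1 ∧
        (∀ u v, B (g u) (g v) = B u v) ∧
        (∀ i, ∃ j, Submodule.map (g : (Fin 3 → ℂ) →ₗ[ℂ] (Fin 3 → ℂ)) (l i) = l j)} :=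
    fun p => ⟨mkIso b p.1 (cv p.1 p.2.1.1 p.2.2.1)
        (hcvne p.1 p.2.1.1 p.2.2.1 p.2.1.2 p.2.2.2),
      hmemS p.1 (cv p.1 p.2.1.1 p.2.2.1) (hcvne p.1 p.2.1.1 p.2.2.1 p.2.1.2 p.2.2.2)
        (hcvsq p.1 p.2.1.1 p.2.2.1 p.2.1.2 p.2.2.2)
        (hcvdet p.1 p.2.1.1 p.2.2.1 p.2.1.2 p.2.2.2)⟩
  -- injectivity
  have hrepr : ∀ (σ σ' : Equiv.Perm (Fin 3)) (c c' : Fin 3 → ℂ)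
      (hc : ∀ i, c i ≠ 0) (hc' : ∀ i, c' i ≠ 0),
      mkIso b σ c hc = mkIso b σ' c' hc' → ∀ i, σ i = σ' i ∧ c i = c' i := by
    intro σ σ' c c' hc hc' heq i
    have happ : c i • b (σ i) = c' i • b (σ' i) := by
      rw [← mkIso_apply b σ c hc, ← mkIso_apply b σ' c' hc', heq]
    have hr := congrArg b.repr happ
    rw [_root_.map_smul, _root_.map_smul, Basis.repr_self, Basis.repr_self] at hr
    rw [Finsupp.smul_single, Finsupp.smul_single, smul_eq_mul, smul_eq_mul,
      mul_one, mul_one] at hr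
    rcases (Finsupp.single_eq_single_iff _ _ _ _).mp hr with ⟨h1, h2⟩ | ⟨h1, _⟩
    · exact ⟨h1, h2⟩
    · exact absurd h1 (hc i)
  have hΦinj : Function.Injective Φ := by
    rintro ⟨σ, ⟨e0, he0⟩, ⟨e1, he1⟩⟩ ⟨σ', ⟨e0', he0'⟩, ⟨e1', he1'⟩⟩ hpq
    have heq : mkIso b σ (cv σ e0 e1) (hcvne σ e0 e1 he0 he1)
        = mkIso b σ' (cv σ' e0' e1') (hcvne σ' e0' e1' he0' he1') := by
      exact Subtype.ext_iff.mp hpq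
    have hcomp := hrepr _ _ _ _ _ _ heq
    have hσ : σ = σ' := Equiv.ext fun i => (hcomp i).1
    subst hσ
    have h0 : e0 = e0' := by
      have := (hcomp 0).2
      rw [(hcva σ e0 e1).1, (hcva σ e0' e1').1] at this
      exact mul_right_cancel₀ (hs0 σ 0) this
    have h1 : e1 = e1' := by
      have := (hcomp 1).2
      rw [(hcva σ e0 e1).2.1, (hcva σ e0' e1').2.1] at this
      exact mul_right_cancel₀ (hs0 σ 1) this
    subst h0; subst h1
    rfl
  -- surjectivity
  have hΦsurj : Function.Surjective Φ := by
    rintro ⟨g, hg⟩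
    obtain ⟨σ, c, hc, hc2, hcdet, hgeq⟩ := hSchar g hg.1 hg.2.1 hg.2.2
    have hcs : ∀ i, c i ^ 2 = s σ i ^ 2 :=
      fun i => mul_right_cancel₀ (hd0 (σ i)) ((hc2 i).trans (hs σ i).symm)
    have he0 : (c 0 / s σ 0) ^ 2 = 1 := by
      rw [div_pow, hcs 0, div_self (pow_ne_zero 2 (hs0 σ 0))]
    have he1 : (c 1 / s σ 1) ^ 2 = 1 := by
      rw [div_pow, hcs 1, div_self (pow_ne_zero 2 (hs0 σ 1))]
    refine ⟨⟨σ, ⟨c 0 / s σ 0, he0⟩, ⟨c 1 / s σ 1, he1⟩⟩, ?_⟩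
    apply Subtype.ext
    show mkIso b σ (cv σ (c 0 / s σ 0) (c 1 / s σ 1))
      (hcvne σ (c 0 / s σ 0) (c 1 / s σ 1) he0 he1) = g
    have hfun : cv σ (c 0 / s σ 0) (c 1 / s σ 1) = c := by
      have h0 : cv σ (c 0 / s σ 0) (c 1 / s σ 1) 0 = c 0 := by
        rw [(hcva σ _ _).1, div_mul_cancel₀ _ (hs0 σ 0)]
      have h1 : cv σ (c 0 / s σ 0) (c 1 / s σ 1) 1 = c 1 := by
        rw [(hcva σ _ _).2.1, div_mul_cancel₀ _ (hs0 σ 1)]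
      have h2 : cv σ (c 0 / s σ 0) (c 1 / s σ 1) 2 = c 2 := by
        have hd1 := hcvdet σ _ _ he0 he1
        rw [h0, h1] at hd1
        have hne : ((Equiv.Perm.sign σ : ℤ) : ℂ) * (c 0 * c 1) ≠ 0 :=
          mul_ne_zero (hsgn0 σ) (mul_ne_zero (hc 0) (hc 1))
        apply mul_left_cancel₀ hne
        calc ((Equiv.Perm.sign σ : ℤ) : ℂ) * (c 0 * c 1) * cv σ (c 0 / s σ 0) (c 1 / s σ 1) 2
            = ((Equiv.Perm.sign σ : ℤ) : ℂ) *
              (c 0 * c 1 * cv σ (c 0 / s σ 0) (c 1 / s σ 1) 2) := by ring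
          _ = 1 := hd1
          _ = ((Equiv.Perm.sign σ : ℤ) : ℂ) * (c 0 * c 1 * c 2) := hcdet.symm
          _ = ((Equiv.Perm.sign σ : ℤ) : ℂ) * (c 0 * c 1) * c 2 := by ring
      funext i
      fin_cases i
      · exact h0
      · exact h1
      · exact h2
    rw [hgeq]
    congr 1
  -- ### Step 10: conclusion
  rw [← Nat.card_coe_set_eq,
    ← Nat.card_eq_of_bijective Φ ⟨hΦinj, hΦsurj⟩,
    Nat.card_prod, Nat.card_prod, hU, Nat.card_eq_fintype_card]
  simp [Fintype.card_perm]
  decide
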